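/- For characters χ_φ and χ_ψ associated to functions φ, ψ : X → ℂ, the convolution identity χ_φ ⋆ χ_ψ = χ_{φ + ψ + φψ} holds, where (φ + ψ + φψ)(x) = φ(x) + ψ(x) + φ(x)ψ(x). -/
import Mathlib


open Finset

/-- Kondratiev–Kuna convolution of functions on finite configurations. -/
noncomputable def kkConv {X : Type*} [DecidableEq X] (f g : Finset X → ℂ) (ξ : Finset X) : ℂ :=
  ∑ A ∈ ξ.powerset, ∑ B ∈ ξ.powerset, if A ∪ B = ξ then f A * g B else 0

/-- The character associated to a function `φ : X → ℂ`. -/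
noncomputable def kkChar {X : Type*} (φ : X → ℂ) (ξ : Finset X) : ℂ :=
  ∏ x ∈ ξ, φ x

theorem kkConv_char {X : Type*} [DecidableEq X] (φ ψ : X → ℂ) :
    kkConv (kkChar φ) (kkChar ψ) = kkChar (fun x => φ x + ψ x + φ x * ψ x) := by
  funext ξ
  induction ξ using Finset.induction_on with
  | empty => simp [kkConv, kkChar]
  | @insert a ξ ha ih =>
    have key : ∀ A ∈ ξ.powerset, ∀ B ∈ ξ.powerset,
        (insert a A ∪ B = insert a ξ ↔ A ∪ B = ξ) ∧
        (A ∪ insert a B = insert a ξ ↔ A ∪ B = ξ) ∧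
        (insert a A ∪ insert a B = insert a ξ ↔ A ∪ B = ξ) ∧
        ¬ (A ∪ B = insert a ξ) := by
      intro A hA B hB
      rw [Finset.mem_powerset] at hA hB
      have hab : a ∉ A ∪ B := by
        simp only [Finset.mem_union]
        rintro (h | h)
        · exact ha (hA h)
        · exact ha (hB h)
      have h1 : insert a A ∪ B = insert a (A ∪ B) := Finset.insert_union a A B
      have h2 : A ∪ insert a B = insert a (A ∪ B) := Finset.union_insert a A B
      have h3 : insert a A ∪ insert a B = insert a (A ∪ B) := by
        rw [Finset.insert_union, Finset.union_insert, Finset.insert_idem]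
      have hinj' : insert a (A ∪ B) = insert a ξ ↔ A ∪ B = ξ := by
        constructor
        · intro h
          apply Finset.ext
          intro x
          constructor
          · intro hx
            have : x ∈ insert a ξ := h ▸ Finset.mem_insert_of_mem hx
            rcases Finset.mem_insert.1 this with rfl | hx'
            · exact absurd hx hab
            · exact hx'
          · intro hx
            have : x ∈ insert a (A ∪ B) := h ▸ Finset.mem_insert_of_mem hx
            rcases Finset.mem_insert.1 this with rfl | hx'
            · exact absurd hx ha
            · exact hx'
        · intro h; rw [h]
      refine ⟨h1 ▸ hinj', h2 ▸ hinj', h3 ▸ hinj', ?_⟩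
      intro h
      have : a ∈ A ∪ B := h ▸ Finset.mem_insert_self a ξ
      exact hab this
    have hchar : ∀ (f : X → ℂ) (S : Finset X), a ∉ S →
        kkChar f (insert a S) = f a * kkChar f S := by
      intro f S hS
      simp [kkChar, Finset.prod_insert hS]
    calc kkConv (kkChar φ) (kkChar ψ) (insert a ξ)
        = (φ a + ψ a + φ a * ψ a) * kkConv (kkChar φ) (kkChar ψ) ξ := by
          rw [kkConv, Finset.sum_powerset_insert ha]
          simp only [Finset.sum_powerset_insert ha]
          rw [kkConv, Finset.mul_sum, ← Finset.sum_add_distrib]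
          refine Finset.sum_congr rfl fun A hA => ?_
          rw [Finset.mul_sum, ← Finset.sum_add_distrib, ← Finset.sum_add_distrib,
            ← Finset.sum_add_distrib]
          refine Finset.sum_congr rfl fun B hB => ?_
          obtain ⟨k1, k2, k3, k4⟩ := key A hA B hB
          have haA : a ∉ A := fun h => ha (Finset.mem_powerset.1 hA h)
          have haB : a ∉ B := fun h => ha (Finset.mem_powerset.1 hB h)
          rw [if_neg k4]
          by_cases h : A ∪ B = ξ
          · rw [if_pos (k1.2 h), if_pos (k2.2 h), if_pos (k3.2 h), if_pos h,
              hchar φ A haA, hchar ψ B haB]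
            ring
          · rw [if_neg (fun hc => h (k1.1 hc)), if_neg (fun hc => h (k2.1 hc)),
              if_neg (fun hc => h (k3.1 hc)), if_neg h]
            ring
      _ = kkChar (fun x => φ x + ψ x + φ x * ψ x) (insert a ξ) := by
          rw [ih, hchar _ _ ha]
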